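/- Rectification of a nonsingular formal vector field: let R = K[[x₁,...,xₙ]] over a field K of characteristic 0, and let v = Σ aᵢ(x)∂ᵢ be a derivation of R such that aᵢ(0) ≠ 0 for some i. Then v lies in the adjoint orbit of ∂₁, i.e. there exists an automorphism φ of R with φ ∘ v ∘ φ⁻¹ = ∂₁. -/

import Mathlib

/-- Formal partial derivative `∂ᵢ` of a multivariate formal power series. -/
noncomputable def mvPderiv {n : ℕ} {K : Type*} [CommRing K] (i : Fin n)
    (f : MvPowerSeries (Fin n) K) : MvPowerSeries (Fin n) K :=
  fun m => ((m i + 1 : ℕ) : K) * MvPowerSeries.coeff (m + Finsupp.single i 1) f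

set_option linter.unusedSectionVars false
set_option linter.unusedVariables false
set_option maxHeartbeats 1000000

namespace Rect

variable {K : Type*} [Field K] [CharZero K] {n : ℕ}

local notation "R" => MvPowerSeries (Fin n) K
local notation "M" => (Fin n →₀ ℕ)

def deg (m : M) : ℕ := ∑ j, m j

lemma deg_add (p q : M) : deg (p + q) = deg p + deg q := by
  simp [deg, Finset.sum_add_distrib]

lemma deg_single (z : Fin n) (k : ℕ) : deg (Finsupp.single z k) = k := by
  simp [deg, Finsupp.single_apply]

lemma le_deg (m : M) (j : Fin n) : m j ≤ deg m :=
  Finset.single_le_sum (fun i _ => Nat.zero_le _) (Finset.mem_univ j)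

lemma deg_eq_zero {m : M} (h : deg m = 0) : m = 0 := by
  ext j
  simpa using Nat.le_antisymm (h ▸ le_deg m j) (Nat.zero_le _)

lemma deg_erase (z : Fin n) (m : M) : deg m = deg (Finsupp.erase z m) + m z := by
  conv_lhs => rw [← Finsupp.erase_add_single z m]
  rw [deg_add, deg_single]

lemma erase_add_single_eq (z : Fin n) (m : M) : Finsupp.erase z m + Finsupp.single z (m z) = m :=
  Finsupp.erase_add_single z m

lemma erase_apply_ne (z j : Fin n) (m : M) (h : j ≠ z) : Finsupp.erase z m j = m j :=
  Finsupp.erase_ne h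

lemma erase_add_single_right (z : Fin n) (m : M) (k : ℕ) :
    Finsupp.erase z (m + Finsupp.single z k) = Finsupp.erase z m := by
  ext j
  by_cases h : j = z
  · subst h; simp
  · simp [Finsupp.erase_ne h, Finsupp.single_apply, Ne.symm h]

-- pointwise coefficient lemmas
lemma addc (f g : R) (m : M) : (f + g) m = f m + g m := rfl
lemma subc (f g : R) (m : M) : (f - g) m = f m - g m := rfl
lemma smulc (c : K) (f : R) (m : M) : (c • f) m = c * f m := rfl
lemma zeroc (m : M) : (0 : R) m = 0 := rfl
lemma mulc (f g : R) (m : M) :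
    (f * g) m = ∑ p ∈ Finset.HasAntidiagonal.antidiagonal m, f p.1 * g p.2 := MvPowerSeries.coeff_mul m f g

lemma sumc {ι : Type*} (s : Finset ι) (f : ι → R) (m : M) :
    (∑ i ∈ s, f i) m = ∑ i ∈ s, (f i) m := map_sum (MvPowerSeries.coeff m) f s

lemma erase_eq_self {z : Fin n} {P : M} (h : P z = 0) : Finsupp.erase z P = P := by
  ext j
  by_cases hj : j = z
  · subst hj; simp [Finsupp.erase_same, h]
  · simp [Finsupp.erase_ne hj]

lemma fact_helper (a b : ℕ) :
    (((a + b).factorial : K))⁻¹ * (((a + b).choose a : K)) =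
      ((a.factorial : K))⁻¹ * ((b.factorial : K))⁻¹ := by
  have h := Nat.add_choose_mul_factorial_mul_factorial b a
  rw [Nat.add_comm b a] at h
  have hK : (((a + b).choose a : K)) * (b.factorial : K) * (a.factorial : K)
      = ((a + b).factorial : K) := by exact_mod_cast congrArg (Nat.cast : ℕ → K) h
  have ha : (a.factorial : K) ≠ 0 := Nat.cast_ne_zero.mpr (Nat.factorial_ne_zero a)
  have hb : (b.factorial : K) ≠ 0 := Nat.cast_ne_zero.mpr (Nat.factorial_ne_zero b)
  have hab : ((a + b).factorial : K) ≠ 0 := Nat.cast_ne_zero.mpr (Nat.factorial_ne_zero _)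
  field_simp
  linear_combination hK

lemma pderiv_apply (i : Fin n) (f : R) (m : M) :
    mvPderiv i f m = ((m i + 1 : ℕ) : K) * f (m + Finsupp.single i 1) := rfl

lemma pderiv_add (i : Fin n) (f g : R) : mvPderiv i (f + g) = mvPderiv i f + mvPderiv i g := by
  funext m; simp only [pderiv_apply, addc, mul_add]

lemma pderiv_smul (i : Fin n) (c : K) (f : R) : mvPderiv i (c • f) = c • mvPderiv i f := by
  funext m; simp only [pderiv_apply, smulc]; ring

/-- vanishing up to order `c` : all coefficients in degree `< c` vanish -/
def Van (c : ℕ) (f : R) : Prop := ∀ p, deg p < c → f p = 0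

lemma Van.mono {c c' : ℕ} {f : R} (h : Van c f) (hc : c' ≤ c) : Van c' f :=
  fun p hp => h p (lt_of_lt_of_le hp hc)

lemma Van_zero (c : ℕ) : Van c (0 : R) := fun _ _ => rfl

lemma Van.add {c : ℕ} {f g : R} (hf : Van c f) (hg : Van c g) : Van c (f + g) := by
  intro p hp; rw [addc, hf p hp, hg p hp, add_zero]

lemma Van.sub {c : ℕ} {f g : R} (hf : Van c f) (hg : Van c g) : Van c (f - g) := by
  intro p hp; rw [subc, hf p hp, hg p hp, sub_zero]

lemma Van.smul {c : ℕ} {f : R} (co : K) (hf : Van c f) : Van c (co • f) := by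
  intro p hp; rw [smulc, hf p hp, mul_zero]

lemma Van.sum {c : ℕ} {ι : Type*} (s : Finset ι) (f : ι → R) (hf : ∀ i ∈ s, Van c (f i)) :
    Van c (∑ i ∈ s, f i) := by
  intro p hp
  have : (∑ i ∈ s, f i) p = ∑ i ∈ s, (f i) p := map_sum (MvPowerSeries.coeff p) f s
  rw [this]
  exact Finset.sum_eq_zero fun i hi => hf i hi p hp

lemma Van.mul {c e : ℕ} {f g : R} (hf : Van c f) (hg : Van e g) : Van (c + e) (f * g) := by
  intro p hp
  rw [mulc]
  refine Finset.sum_eq_zero fun q hq => ?_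
  rw [Finset.HasAntidiagonal.mem_antidiagonal] at hq
  have hdeg : deg q.1 + deg q.2 < c + e := by rw [← deg_add, hq]; exact hp
  rcases lt_or_ge (deg q.1) c with h1 | h1
  · rw [hf q.1 h1, zero_mul]
  · have : deg q.2 < e := by omega
    rw [hg q.2 this, mul_zero]

lemma Van.pderiv {c : ℕ} {f : R} (i : Fin n) (hf : Van c f) : Van (c - 1) (mvPderiv i f) := by
  intro p hp
  rw [pderiv_apply]
  have : deg (p + Finsupp.single i 1) < c := by
    rw [deg_add, deg_single]; omega
  rw [hf _ this, mul_zero]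

section W
variable (z : Fin n) (w : MvPowerSeries (Fin n) K → MvPowerSeries (Fin n) K)
  (hadd : ∀ f g, w (f + g) = w f + w g)
  (hsmul : ∀ (c : K) f, w (c • f) = c • w f)
  (hleib : ∀ f g, w (f * g) = f * w g + w f * g)
include hadd hsmul hleib

lemma w_zero : w 0 = 0 := by
  have h := hadd 0 0
  rw [add_zero] at h
  exact left_eq_add.mp h

lemma w_sum {ι : Type*} (s : Finset ι) (f : ι → R) :
    w (∑ i ∈ s, f i) = ∑ i ∈ s, w (f i) := by
  classical
  induction s using Finset.cons_induction with
  | empty => simpa using w_zero w hadd hsmul hleib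
  | cons i s hi ih => rw [Finset.sum_cons, hadd, ih, Finset.sum_cons]

lemma w_one : w 1 = 0 := by
  have h := hleib 1 1
  rw [mul_one, one_mul, mul_one] at h
  exact left_eq_add.mp h

lemma iter_zero (k : ℕ) : w^[k] 0 = 0 := by
  induction k with
  | zero => rfl
  | succ k ih => rw [Function.iterate_succ_apply, w_zero w hadd hsmul hleib, ih]

lemma iter_add (k : ℕ) (f g : R) : w^[k] (f + g) = w^[k] f + w^[k] g := by
  induction k generalizing f g with
  | zero => rfl
  | succ k ih => rw [Function.iterate_succ_apply, hadd, ih, Function.iterate_succ_apply,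
      Function.iterate_succ_apply]

lemma iter_smul (k : ℕ) (c : K) (f : R) : w^[k] (c • f) = c • w^[k] f := by
  induction k generalizing f with
  | zero => rfl
  | succ k ih => rw [Function.iterate_succ_apply, hsmul, ih, Function.iterate_succ_apply]

/-- iterated Leibniz rule -/
lemma iter_leibniz (k : ℕ) (f g : R) :
    w^[k] (f * g) = ∑ i ∈ Finset.range (k + 1),
      ((k.choose i : K)) • (w^[i] f * w^[k - i] g) := by
  induction k with
  | zero => simp
  | succ k ih =>
    rw [Function.iterate_succ_apply', ih, w_sum w hadd hsmul hleib]
    have step : ∀ i ∈ Finset.range (k + 1),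
        w (((k.choose i : K)) • (w^[i] f * w^[k - i] g)) =
        ((k.choose i : K)) • (w^[i] f * w^[k + 1 - i] g)
          + ((k.choose i : K)) • (w^[i + 1] f * w^[k - i] g) := by
      intro i hi
      rw [Finset.mem_range] at hi
      have hik : i ≤ k := Nat.lt_succ_iff.mp hi
      rw [hsmul, hleib, smul_add]
      have h1 : k + 1 - i = (k - i) + 1 := by omega
      rw [h1, Function.iterate_succ_apply' w (k - i) g, Function.iterate_succ_apply' w i f]
    rw [Finset.sum_congr rfl step, Finset.sum_add_distrib]
    -- now transform RHS
    have key : ∑ i ∈ Finset.range (k + 2), (((k+1).choose i : K)) • (w^[i] f * w^[k + 1 - i] g)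
        = ∑ i ∈ Finset.range (k + 1), ((k.choose i : K)) • (w^[i] f * w^[k + 1 - i] g)
          + ∑ i ∈ Finset.range (k + 1), ((k.choose i : K)) • (w^[i + 1] f * w^[k - i] g) := by
      set x : ℕ → R := fun i => w^[i] f * w^[k + 1 - i] g with hx
      have hpascal : ∀ i, (((k+1).choose (i+1) : K)) = (k.choose i : K) + (k.choose (i+1) : K) := by
        intro i
        rw [Nat.choose_succ_succ]
        push_cast
        ring
      calc ∑ i ∈ Finset.range (k + 2), (((k+1).choose i : K)) • x i
          = ∑ i ∈ Finset.range (k + 1), (((k+1).choose (i+1) : K)) • x (i+1)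
              + (((k+1).choose 0 : K)) • x 0 := Finset.sum_range_succ' _ _
        _ = ∑ i ∈ Finset.range (k + 1), ((k.choose i : K)) • x (i+1)
              + (∑ i ∈ Finset.range (k + 1), ((k.choose (i+1) : K)) • x (i+1)
                  + ((k.choose 0 : K)) • x 0) := by
              rw [Finset.sum_congr rfl (fun i _ => by rw [hpascal i, add_smul]),
                Finset.sum_add_distrib]
              simp only [Nat.choose_zero_right]
              ring
        _ = ∑ i ∈ Finset.range (k + 1), ((k.choose i : K)) • x (i+1)
              + ∑ i ∈ Finset.range (k + 2), ((k.choose i : K)) • x i := by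
              rw [Finset.sum_range_succ' (fun i => ((k.choose i : K)) • x i) (k+1)]
        _ = ∑ i ∈ Finset.range (k + 1), ((k.choose i : K)) • x (i+1)
              + ∑ i ∈ Finset.range (k + 1), ((k.choose i : K)) • x i := by
              rw [Finset.sum_range_succ (fun i => ((k.choose i : K)) • x i) (k+1)]
              simp [Nat.choose_succ_self]
        _ = ∑ i ∈ Finset.range (k + 1), ((k.choose i : K)) • x i
              + ∑ i ∈ Finset.range (k + 1), ((k.choose i : K)) • x (i+1) := by ring
      simp only [hx, Nat.add_sub_add_right]
    rw [key]


end W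

section T
variable (z : Fin n) (w : MvPowerSeries (Fin n) K → MvPowerSeries (Fin n) K)

noncomputable def Tmap : MvPowerSeries (Fin n) K → MvPowerSeries (Fin n) K :=
  fun f m => (((m z).factorial : K))⁻¹ * (w^[m z] f) (Finsupp.erase z m)

lemma Tmap_apply (f : R) (m : M) :
    Tmap z w f m = (((m z).factorial : K))⁻¹ * (w^[m z] f) (Finsupp.erase z m) := rfl

variable (hadd : ∀ f g, w (f + g) = w f + w g)
  (hsmul : ∀ (c : K) f, w (c • f) = c • w f)
  (hleib : ∀ f g, w (f * g) = f * w g + w f * g)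
include hadd hsmul hleib

lemma Tmap_add (f g : R) : Tmap z w (f + g) = Tmap z w f + Tmap z w g := by
  funext m
  rw [addc, Tmap_apply, Tmap_apply, Tmap_apply, iter_add w hadd hsmul hleib, addc, mul_add]

lemma Tmap_smul (c : K) (f : R) : Tmap z w (c • f) = c • Tmap z w f := by
  funext m
  rw [smulc, Tmap_apply, Tmap_apply, iter_smul w hadd hsmul hleib, smulc]
  ring

lemma Tmap_zero : Tmap z w 0 = 0 := by
  funext m
  rw [Tmap_apply, iter_zero w hadd hsmul hleib]
  simp [zeroc]

lemma Tmap_sub (f g : R) : Tmap z w (f - g) = Tmap z w f - Tmap z w g := by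
  have : f - g = f + (-1 : K) • g := by
    rw [neg_one_smul]; ring
  rw [this, Tmap_add z w hadd hsmul hleib, Tmap_smul z w hadd hsmul hleib, neg_one_smul]
  ring

lemma Tmap_one : Tmap z w 1 = 1 := by
  funext m
  rw [Tmap_apply]
  rcases Nat.eq_zero_or_pos (m z) with h | h
  · rw [h, erase_eq_self h]
    simp
  · obtain ⟨k, hk⟩ := Nat.exists_eq_succ_of_ne_zero (Nat.pos_iff_ne_zero.mp h)
    rw [hk, Function.iterate_succ_apply, w_one w hadd hsmul hleib,
      iter_zero w hadd hsmul hleib]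
    have hm : m ≠ 0 := by
      intro h0
      rw [h0] at h
      simp at h
    have h1 : (1 : R) m = if m = 0 then 1 else 0 := MvPowerSeries.coeff_one m
    rw [h1, if_neg hm, zeroc, mul_zero]

lemma Tmap_mul (f g : R) : Tmap z w (f * g) = Tmap z w f * Tmap z w g := by
  funext m
  have hLHS : Tmap z w (f * g) m
      = ∑ y ∈ Finset.range (m z + 1) ×ˢ Finset.HasAntidiagonal.antidiagonal (Finsupp.erase z m),
          (((m z).factorial : K))⁻¹ * (((m z).choose y.1 : K)) *
            ((w^[y.1] f) y.2.1 * (w^[m z - y.1] g) y.2.2) := by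
    rw [Tmap_apply, iter_leibniz w hadd hsmul hleib, sumc, Finset.mul_sum, Finset.sum_product]
    refine Finset.sum_congr rfl fun i _ => ?_
    rw [smulc, mulc, Finset.mul_sum, Finset.mul_sum]
    refine Finset.sum_congr rfl fun x _ => ?_
    ring
  rw [hLHS, mulc]
  refine (Finset.sum_nbij'
    (i := fun (p : M × M) => ((p.1 z, (Finsupp.erase z p.1, Finsupp.erase z p.2)) : ℕ × (M × M)))
    (j := fun (y : ℕ × (M × M)) =>
      ((y.2.1 + Finsupp.single z y.1, y.2.2 + Finsupp.single z (m z - y.1)) : M × M))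
    ?_ ?_ ?_ ?_ ?_).symm
  · rintro ⟨p, q⟩ hpq
    rw [Finset.HasAntidiagonal.mem_antidiagonal] at hpq
    have hz : p z + q z = m z := by rw [← hpq, Finsupp.add_apply]
    refine Finset.mem_product.mpr ⟨Finset.mem_range.mpr ?_, Finset.HasAntidiagonal.mem_antidiagonal.mpr ?_⟩
    · simp only
      omega
    · simp only
      rw [← hpq, Finsupp.erase_add]
  · rintro ⟨i, P, Q⟩ hy
    rw [Finset.mem_product, Finset.mem_range, Finset.HasAntidiagonal.mem_antidiagonal] at hy
    obtain ⟨hik, hPQ⟩ := hy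
    simp only at hik hPQ ⊢
    rw [Finset.HasAntidiagonal.mem_antidiagonal]
    have hstep : P + Finsupp.single z i + (Q + Finsupp.single z (m z - i))
        = (P + Q) + Finsupp.single z (i + (m z - i)) := by
      rw [Finsupp.single_add]
      abel
    rw [hstep, hPQ]
    have hik2 : i + (m z - i) = m z := by omega
    rw [hik2, Finsupp.erase_add_single]
  · rintro ⟨p, q⟩ hpq
    rw [Finset.HasAntidiagonal.mem_antidiagonal] at hpq
    have hz : p z + q z = m z := by rw [← hpq, Finsupp.add_apply]
    have h2 : m z - p z = q z := by omega
    simp only [h2, Finsupp.erase_add_single]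
  · rintro ⟨i, P, Q⟩ hy
    rw [Finset.mem_product, Finset.mem_range, Finset.HasAntidiagonal.mem_antidiagonal] at hy
    obtain ⟨hik, hPQ⟩ := hy
    simp only at hik hPQ ⊢
    have hm'z : (Finsupp.erase z m) z = 0 := Finsupp.erase_same
    have hsum : P z + Q z = 0 := by
      have h0 := congrArg (fun u : M => u z) hPQ
      simpa [Finsupp.add_apply, hm'z] using h0
    have hPz : P z = 0 := by omega
    have hQz : Q z = 0 := by omega
    have h1 : (P + Finsupp.single z i) z = i := by
      rw [Finsupp.add_apply, Finsupp.single_eq_same, hPz, zero_add]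
    have h2 : Finsupp.erase z (P + Finsupp.single z i) = P := by
      rw [erase_add_single_right, erase_eq_self hPz]
    have h3 : Finsupp.erase z (Q + Finsupp.single z (m z - i)) = Q := by
      rw [erase_add_single_right, erase_eq_self hQz]
    rw [h1, h2, h3]
  · rintro ⟨p, q⟩ hpq
    rw [Finset.HasAntidiagonal.mem_antidiagonal] at hpq
    have hz : p z + q z = m z := by rw [← hpq, Finsupp.add_apply]
    simp only
    rw [Tmap_apply, Tmap_apply]
    have h2 : m z - p z = q z := by omega
    rw [h2]
    have hch : (m z).choose (p z) = ((p z + q z).choose (p z)) := by rw [hz]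
    have hfa : ((m z).factorial : K) = (((p z + q z).factorial : K)) := by rw [hz]
    rw [hch, hfa, fact_helper (K := K) (p z) (q z)]
    ring

lemma Tmap_w (f : R) : Tmap z w (w f) = mvPderiv z (Tmap z w f) := by
  funext m
  rw [Tmap_apply, pderiv_apply, Tmap_apply]
  have h1 : ((m + Finsupp.single z 1 : M)) z = m z + 1 := by
    rw [Finsupp.add_apply, Finsupp.single_eq_same]
  rw [h1, erase_add_single_right, ← Function.iterate_succ_apply]
  rw [Nat.factorial_succ]
  have hne : ((m z).factorial : K) ≠ 0 := Nat.cast_ne_zero.mpr (Nat.factorial_ne_zero _)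
  have hne2 : ((m z : ℕ) + 1 : K) ≠ 0 := Nat.cast_add_one_ne_zero (m z)
  push_cast
  field_simp

end T


section D

variable (z : Fin n) (β : Fin n → K)

noncomputable def Dmap : MvPowerSeries (Fin n) K → MvPowerSeries (Fin n) K :=
  fun f => ∑ j, β j • mvPderiv j f

lemma Dmap_coeff (f : R) (p : M) :
    Dmap β f p = ∑ j, β j * (((p j + 1 : ℕ) : K) * f (p + Finsupp.single j 1)) := by
  rw [Dmap, sumc]
  exact Finset.sum_congr rfl fun j _ => by rw [smulc, pderiv_apply]

lemma pderiv_sub (i : Fin n) (f g : R) : mvPderiv i (f - g) = mvPderiv i f - mvPderiv i g := by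
  funext m
  rw [subc, pderiv_apply, pderiv_apply, pderiv_apply, subc, mul_sub]

lemma Dmap_sub (f g : R) : Dmap β (f - g) = Dmap β f - Dmap β g := by
  rw [Dmap, Dmap, Dmap, ← Finset.sum_sub_distrib]
  exact Finset.sum_congr rfl fun j _ => by rw [pderiv_sub, smul_sub]

lemma Van_D {c : ℕ} {f : R} (hf : Van c f) : Van (c - 1) (Dmap β f) := by
  rw [Dmap]
  exact Van.sum _ _ fun j _ => (hf.pderiv j).smul (β j)

lemma Van_iter_D {c : ℕ} {f : R} (hf : Van c f) (k : ℕ) : Van (c - k) ((Dmap β)^[k] f) := by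
  induction k with
  | zero => simpa using hf
  | succ k ih =>
    rw [Function.iterate_succ_apply', ← Nat.sub_sub]
    exact Van_D β ih

/-- the key triangular formula for iterates of the principal part -/
lemma lemA (f : R) : ∀ (k : ℕ) (p : M), (∀ q, q z < p z + k → f q = 0) →
    (Dmap β)^[k] f p
      = ((∏ r ∈ Finset.range k, (p z + 1 + r) : ℕ) : K) * β z ^ k
          * f (p + Finsupp.single z k) := by
  intro k
  induction k with
  | zero =>
    intro p hp
    simp
  | succ k ih =>
    intro p hp
    rw [Function.iterate_succ_apply', Dmap_coeff]
    rw [Finset.sum_eq_single z]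
    · have hzz : ((p + Finsupp.single z 1 : M)) z = p z + 1 := by
        rw [Finsupp.add_apply, Finsupp.single_eq_same]
      have hih := ih (p + Finsupp.single z 1) (by
        intro q hq
        rw [hzz] at hq
        exact hp q (by omega))
      rw [hih, hzz]
      have hsingle : p + Finsupp.single z 1 + Finsupp.single z k
          = p + Finsupp.single z (k + 1) := by
        rw [add_assoc, ← Finsupp.single_add, Nat.add_comm 1 k]
      rw [hsingle]
      have hprod : (p z + 1) * (∏ r ∈ Finset.range k, (p z + 1 + 1 + r))
          = ∏ r ∈ Finset.range (k + 1), (p z + 1 + r) := by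
        rw [Finset.prod_range_succ' (fun r => p z + 1 + r) k]
        have : (∏ r ∈ Finset.range k, (p z + 1 + (r + 1)))
            = ∏ r ∈ Finset.range k, (p z + 1 + 1 + r) :=
          Finset.prod_congr rfl fun r _ => by omega
        rw [this]
        ring
      rw [← hprod]
      push_cast
      ring
    · intro j _ hjz
      have hzz : ((p + Finsupp.single j 1 : M)) z = p z := by
        rw [Finsupp.add_apply, Finsupp.single_apply, if_neg hjz, add_zero]
      have hih := ih (p + Finsupp.single j 1) (by
        intro q hq
        rw [hzz] at hq
        exact hp q (by omega))
      rw [hih]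
      have hz2 : ((p + Finsupp.single j 1 + Finsupp.single z k : M)) z = p z + k := by
        rw [Finsupp.add_apply, Finsupp.single_eq_same, hzz]
      have : f (p + Finsupp.single j 1 + Finsupp.single z k) = 0 :=
        hp _ (by rw [hz2]; omega)
      rw [this]
      ring
    · intro habs
      exact absurd (Finset.mem_univ z) habs

/-- injectivity of the symbol map on a homogeneous piece -/
lemma S_inj (hβz : β z ≠ 0) (f : R) (d : ℕ)
    (hsupp : ∀ p, deg p ≠ d → f p = 0)
    (hS : ∀ m2, deg m2 = d → Tmap z (Dmap β) f m2 = 0) : f = 0 := by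
  have main : ∀ j, ∀ p : M, p z = j → f p = 0 := by
    intro j
    induction j using Nat.strong_induction_on with
    | _ j ihj =>
      intro p hpz
      by_cases hd : deg p = d
      · have hp' : ∀ q : M, q z < (Finsupp.erase z p) z + j → f q = 0 := by
          intro q hq
          rw [Finsupp.erase_same, Nat.zero_add] at hq
          exact ihj (q z) hq q rfl
        have hA := lemA z β f j (Finsupp.erase z p) hp'
        have hT := hS p hd
        rw [Tmap_apply, hpz] at hT
        have hγ : ((j.factorial : K))⁻¹ ≠ 0 :=
          inv_ne_zero (Nat.cast_ne_zero.mpr (Nat.factorial_ne_zero _))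
        have hDz : ((Dmap β)^[j] f) (Finsupp.erase z p) = 0 := by
          rcases mul_eq_zero.mp hT with h | h
          · exact absurd h hγ
          · exact h
        rw [hA] at hDz
        have hback : Finsupp.erase z p + Finsupp.single z j = p := by
          rw [← hpz, Finsupp.erase_add_single]
        rw [hback, Finsupp.erase_same] at hDz
        have hfact : (∏ r ∈ Finset.range j, (0 + 1 + r)) = j.factorial := by
          rw [← Finset.prod_range_add_one_eq_factorial]
          exact Finset.prod_congr rfl fun r _ => by omega
        rw [hfact] at hDz
        have h1 : (j.factorial : K) ≠ 0 := Nat.cast_ne_zero.mpr (Nat.factorial_ne_zero _)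
        have h2 : (β z) ^ j ≠ 0 := pow_ne_zero _ hβz
        rcases mul_eq_zero.mp hDz with h | h
        · rcases mul_eq_zero.mp h with h' | h'
          · exact absurd h' h1
          · exact absurd h' h2
        · exact h
      · exact hsupp p hd
  funext p
  exact main (p z) p rfl

end D


lemma finite_below (d : ℕ) : Finite {m : M // deg m ≤ d} := by
  have hinj : Function.Injective
      (fun (m : {m : M // deg m ≤ d}) =>
        (fun j => (⟨m.1 j, Nat.lt_succ_of_le (le_trans (le_deg m.1 j) m.2)⟩ : Fin (d+1))
          : Fin n → Fin (d+1))) := by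
    intro m1 m2 hm
    apply Subtype.ext
    apply Finsupp.ext
    intro j
    exact congrArg Fin.val (congrFun hm j)
  exact Finite.of_injective _ hinj

noncomputable def extend (d : ℕ) (u : {m : M // deg m ≤ d} → K) : MvPowerSeries (Fin n) K :=
  fun p => if hp : deg p ≤ d then u ⟨p, hp⟩ else 0

lemma extend_apply_le (d : ℕ) (u : {m : M // deg m ≤ d} → K) (p : M) (hp : deg p ≤ d) :
    extend d u p = u ⟨p, hp⟩ := dif_pos hp

lemma extend_apply_gt (d : ℕ) (u : {m : M // deg m ≤ d} → K) (p : M) (hp : ¬ deg p ≤ d) :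
    extend d u p = 0 := dif_neg hp

section Tt
variable (z : Fin n) (w : MvPowerSeries (Fin n) K → MvPowerSeries (Fin n) K)
  (hadd : ∀ f g, w (f + g) = w f + w g)
  (hsmul : ∀ (c : K) f, w (c • f) = c • w f)
  (hleib : ∀ f g, w (f * g) = f * w g + w f * g)
include hadd hsmul hleib in
noncomputable def Tt (d : ℕ) :
    ({m : M // deg m ≤ d} → K) →ₗ[K] ({m : M // deg m ≤ d} → K) where
  toFun u := fun m => Tmap z w (extend d u) m.1
  map_add' u v := by
    funext m
    have hext : extend d (u + v) = extend d u + extend d v := by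
      funext p
      rw [addc]
      by_cases hp : deg p ≤ d
      · rw [extend_apply_le d _ p hp, extend_apply_le d _ p hp, extend_apply_le d _ p hp]
        rfl
      · rw [extend_apply_gt d _ p hp, extend_apply_gt d _ p hp, extend_apply_gt d _ p hp,
          add_zero]
    show Tmap z w (extend d (u + v)) m.1 = Tmap z w (extend d u) m.1 + Tmap z w (extend d v) m.1
    rw [hext, Tmap_add z w hadd hsmul hleib, addc]
  map_smul' c u := by
    funext m
    have hext : extend d (c • u) = c • extend d u := by
      funext p
      rw [smulc]
      by_cases hp : deg p ≤ d
      · rw [extend_apply_le d _ p hp, extend_apply_le d _ p hp]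
        rfl
      · rw [extend_apply_gt d _ p hp, extend_apply_gt d _ p hp, mul_zero]
    show Tmap z w (extend d (c • u)) m.1 = c * Tmap z w (extend d u) m.1
    rw [hext, Tmap_smul z w hadd hsmul hleib, smulc]
end Tt

section Bij

variable (z : Fin n) (w : MvPowerSeries (Fin n) K → MvPowerSeries (Fin n) K)
  (hadd : ∀ f g, w (f + g) = w f + w g)
  (hsmul : ∀ (c : K) f, w (c • f) = c • w f)
  (hleib : ∀ f g, w (f * g) = f * w g + w f * g)
  (b : Fin n → MvPowerSeries (Fin n) K) (β : Fin n → K)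
  (hw : ∀ f, w f = ∑ j, b j * mvPderiv j f)
  (hβ : ∀ j, b j 0 = β j)
  (hβz : β z ≠ 0)

include hw

lemma Van_w {c : ℕ} {f : R} (hf : Van c f) : Van (c - 1) (w f) := by
  rw [hw]
  refine Van.sum _ _ fun j _ => ?_
  have h0 : Van 0 (b j) := fun p hp => absurd hp (Nat.not_lt_zero _)
  simpa using h0.mul (hf.pderiv j)

lemma Van_iter_w {c : ℕ} {f : R} (hf : Van c f) (k : ℕ) : Van (c - k) (w^[k] f) := by
  induction k with
  | zero => simpa using hf
  | succ k ih =>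
    rw [Function.iterate_succ_apply', ← Nat.sub_sub]
    exact Van_w (w := w) (b := b) hw ih

include hβ

lemma Van_wD {c : ℕ} {f : R} (hf : Van c f) : Van c (w f - Dmap β f) := by
  have key : w f - Dmap β f = ∑ j, (b j - MvPowerSeries.C (σ := Fin n) (β j)) * mvPderiv j f := by
    rw [hw, Dmap, ← Finset.sum_sub_distrib]
    refine Finset.sum_congr rfl fun j _ => ?_
    rw [sub_mul, ← MvPowerSeries.smul_eq_C_mul]
  rw [key]
  refine Van.sum _ _ fun j _ => ?_
  have h1 : Van 1 (b j - MvPowerSeries.C (σ := Fin n) (β j)) := by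
    intro p hp
    have hp0 : p = 0 := deg_eq_zero (by omega)
    subst hp0
    rw [subc]
    have hC : (MvPowerSeries.C (σ := Fin n) (β j)) 0 = β j := rfl
    rw [hC, hβ j, sub_self]
  have := h1.mul (hf.pderiv j)
  refine this.mono ?_
  omega

/-- the error term estimate: `w^[k] f` agrees with `(Dmap β)^[k] f` to high order. -/
lemma Van_E {c : ℕ} {f : R} (hf : Van c f) (k : ℕ) :
    Van (c + 1 - k) (w^[k] f - (Dmap β)^[k] f) := by
  induction k with
  | zero => simpa using Van_zero _
  | succ k ih =>
    rw [Function.iterate_succ_apply', Function.iterate_succ_apply']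
    have hdecomp : w (w^[k] f) - Dmap β ((Dmap β)^[k] f)
        = (w (w^[k] f) - Dmap β (w^[k] f)) + Dmap β (w^[k] f - (Dmap β)^[k] f) := by
      rw [Dmap_sub]
      ring
    rw [hdecomp]
    have h1 : Van (c - k) (w (w^[k] f) - Dmap β (w^[k] f)) :=
      Van_wD (w := w) (b := b) (β := β) hw hβ (Van_iter_w (w := w) (b := b) hw hf k)
    have h2 : Van (c + 1 - k - 1) (Dmap β (w^[k] f - (Dmap β)^[k] f)) := Van_D β ih
    have hc : c + 1 - k - 1 = c - k := by omega
    rw [hc] at h2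
    have hc2 : c + 1 - (k + 1) = c - k := by omega
    rw [hc2]
    exact h1.add h2

/-- coefficients of `Tmap` on the lowest-degree stratum agree with the symbol map. -/
lemma TS_eq (f : R) (m : M) (hf : Van (deg m) f) :
    Tmap z w f m = Tmap z (Dmap β) f m := by
  rw [Tmap_apply, Tmap_apply]
  have hkle : m z ≤ deg m := le_deg m z
  have hE := Van_E (w := w) (b := b) (β := β) hw hβ hf (m z)
  have hdeg : deg (Finsupp.erase z m) < deg m + 1 - m z := by
    have := deg_erase z m
    omega
  have h0 := hE (Finsupp.erase z m) hdeg
  rw [subc] at h0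
  rw [sub_eq_zero.mp h0]

omit hβ

/-- coefficients of `Tmap` only depend on coefficients of degree at most `deg m`. -/
lemma T_van (f : R) (m : M) (hf : Van (deg m + 1) f) : Tmap z w f m = 0 := by
  rw [Tmap_apply]
  have hkle : m z ≤ deg m := le_deg m z
  have hvan := Van_iter_w (w := w) (b := b) hw hf (m z)
  have hdeg : deg (Finsupp.erase z m) < deg m + 1 - m z := by
    have := deg_erase z m
    omega
  rw [hvan (Finsupp.erase z m) hdeg, mul_zero]

include hadd hsmul hleib

lemma T_agree (f g : R) (m : M) (h : ∀ p, deg p ≤ deg m → f p = g p) :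
    Tmap z w f m = Tmap z w g m := by
  have hvan : Van (deg m + 1) (f - g) := by
    intro p hp
    rw [subc, h p (by omega), sub_self]
  have h0 := T_van z w b hw (f - g) m hvan
  rw [Tmap_sub z w hadd hsmul hleib, subc] at h0
  exact sub_eq_zero.mp h0

include hβ hβz

/-- a power series supported in degrees `≤ d` whose image vanishes in degrees `≤ d` is zero -/
lemma T_trunc_inj (d : ℕ) (f : R) (hf : ∀ p : M, ¬ deg p ≤ d → f p = 0)
    (h0 : ∀ m : M, deg m ≤ d → Tmap z w f m = 0) : f = 0 := by
  classical
  by_contra hne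
  have hex : ∃ m : M, f m ≠ 0 := by
    by_contra hall
    push_neg at hall
    exact hne (funext hall)
  obtain ⟨m₀, hm₀⟩ := hex
  have hP : ∃ k, ∃ m : M, deg m = k ∧ f m ≠ 0 := ⟨deg m₀, m₀, rfl, hm₀⟩
  set d₀ := Nat.find hP with hd₀
  obtain ⟨m₁, hdeg₁, hne₁⟩ := Nat.find_spec hP
  have hdeg₁' : deg m₁ = d₀ := hdeg₁
  have hmin : ∀ p : M, deg p < d₀ → f p = 0 := by
    intro p hp
    by_contra hfp
    exact Nat.find_min hP hp ⟨p, rfl, hfp⟩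
  set fd : MvPowerSeries (Fin n) K := fun p => if deg p = d₀ then f p else 0 with hfd
  have hf' : Van (d₀ + 1) (f - fd) := by
    intro p hp
    rw [subc]
    by_cases hpd : deg p = d₀
    · have h1 : fd p = f p := by simp only [hfd]; rw [if_pos hpd]
      rw [h1, sub_self]
    · have h1 : fd p = 0 := by simp only [hfd]; rw [if_neg hpd]
      have h2 : f p = 0 := hmin p (by omega)
      rw [h1, h2, sub_self]
  have hS : ∀ m2 : M, deg m2 = d₀ → Tmap z (Dmap β) fd m2 = 0 := by
    intro m2 hm2
    have hd₀led : d₀ ≤ d := by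
      have : deg m₁ ≤ d := by
        by_contra hgt
        exact hne₁ (hf m₁ hgt)
      omega
    have hTf : Tmap z w f m2 = 0 := h0 m2 (by omega)
    have hTf' : Tmap z w (f - fd) m2 = 0 := by
      refine T_van z w b hw (f - fd) m2 ?_
      rw [hm2]
      exact hf'
    have hTfd : Tmap z w fd m2 = 0 := by
      have hsub := congrFun (Tmap_sub z w hadd hsmul hleib f fd) m2
      rw [subc, hTf, hTf'] at hsub
      have h3 : -(Tmap z w fd m2) = 0 := by
        rw [← zero_sub]
        exact hsub.symm
      exact neg_eq_zero.mp h3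
    rw [← hTfd]
    refine (TS_eq z w b β hw hβ fd m2 ?_).symm
    intro p hp
    rw [hm2] at hp
    have : deg p ≠ d₀ := by omega
    show (if deg p = d₀ then f p else 0) = 0
    exact if_neg this
  have hzero : fd = 0 := by
    refine S_inj z β hβz fd d₀ ?_ hS
    intro p hp
    show (if deg p = d₀ then f p else 0) = 0
    exact if_neg hp
  have hlast : fd m₁ = f m₁ := by
    show (if deg m₁ = d₀ then f m₁ else 0) = f m₁
    exact if_pos hdeg₁'
  rw [hzero] at hlast
  exact hne₁ hlast.symm

lemma T_inj : Function.Injective (Tmap z w) := by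
  classical
  intro f g hfg
  have key : ∀ p : M, f p = g p := by
    intro p
    have hzero : (fun q => if deg q ≤ deg p then (f - g) q else 0 : MvPowerSeries (Fin n) K)
        = 0 := by
      refine T_trunc_inj z w hadd hsmul hleib b β hw hβ hβz (deg p) _ ?_ ?_
      · intro q hq
        exact if_neg hq
      · intro m hm
        have hag : Tmap z w (fun q => if deg q ≤ deg p then (f - g) q else 0) m
            = Tmap z w (f - g) m := by
          refine T_agree z w hadd hsmul hleib b hw _ (f - g) m ?_
          intro q hq
          exact if_pos (by omega)
        rw [hag, Tmap_sub z w hadd hsmul hleib, subc, congrFun hfg m, sub_self]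
    have h1 : (if deg p ≤ deg p then (f - g) p else 0) = 0 := by
      have := congrFun hzero p
      simpa using this
    rw [if_pos (le_refl (deg p)), subc] at h1
    exact sub_eq_zero.mp h1
  funext p
  exact key p



lemma Tt_inj (d : ℕ) : Function.Injective (Tt z w hadd hsmul hleib d) := by
  refine (injective_iff_map_eq_zero _).mpr ?_
  intro u hu0
  have hext0 : extend d u = 0 := by
    refine T_trunc_inj z w hadd hsmul hleib b β hw hβ hβz d (extend d u) ?_ ?_
    · intro p hp
      exact extend_apply_gt d u p hp
    · intro m hm
      exact congrFun hu0 ⟨m, hm⟩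
  funext m
  have := congrFun hext0 m.1
  rw [extend_apply_le d u m.1 m.2] at this
  exact this

lemma Tt_surj (d : ℕ) : Function.Surjective (Tt z w hadd hsmul hleib d) := by
  haveI := finite_below (n := n) d
  haveI := Fintype.ofFinite {m : M // deg m ≤ d}
  haveI : Module.Finite K ({m : M // deg m ≤ d} → K) := Module.Finite.pi
  exact LinearMap.surjective_of_injective
    (Tt_inj z w hadd hsmul hleib b β hw hβ hβz d)

lemma T_surj : Function.Surjective (Tmap z w) := by
  classical
  intro h
  have hex : ∀ d : ℕ, ∃ u : {m : M // deg m ≤ d} → K,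
      Tt z w hadd hsmul hleib d u = fun m => h m.1 :=
    fun d => Tt_surj z w hadd hsmul hleib b β hw hβ hβz d (fun m => h m.1)
  choose u hu using hex
  have hcoh : ∀ (d e : ℕ), d ≤ e → ∀ (p : M) (hp : deg p ≤ d),
      extend e (u e) p = u d ⟨p, hp⟩ := by
    intro d e hde
    have hTt : Tt z w hadd hsmul hleib d (fun m => extend e (u e) m.1) = fun m => h m.1 := by
      funext m
      show Tmap z w (extend d (fun m => extend e (u e) m.1)) m.1 = h m.1
      have hag : Tmap z w (extend d (fun m => extend e (u e) m.1)) m.1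
          = Tmap z w (extend e (u e)) m.1 := by
        refine T_agree z w hadd hsmul hleib b hw _ _ m.1 ?_
        intro p hp
        exact extend_apply_le d _ p (le_trans hp m.2)
      rw [hag]
      have h2 : Tmap z w (extend e (u e)) m.1
          = Tt z w hadd hsmul hleib e (u e) ⟨m.1, le_trans m.2 hde⟩ := rfl
      rw [h2, hu e]
    have heq : (fun m => extend e (u e) m.1) = u d :=
      Tt_inj z w hadd hsmul hleib b β hw hβ hβz d (hTt.trans (hu d).symm)
    intro p hp
    exact congrFun heq ⟨p, hp⟩
  refine ⟨fun p => u (deg p) ⟨p, le_refl _⟩, ?_⟩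
  funext m
  have hag : Tmap z w (fun p => u (deg p) ⟨p, le_refl _⟩) m
      = Tmap z w (extend (deg m) (u (deg m))) m := by
    refine T_agree z w hadd hsmul hleib b hw _ _ m ?_
    intro p hp
    exact (hcoh (deg p) (deg m) hp p (le_refl _)).symm
  rw [hag]
  have h2 : Tmap z w (extend (deg m) (u (deg m))) m
      = Tt z w hadd hsmul hleib (deg m) (u (deg m)) ⟨m, le_refl _⟩ := rfl
  rw [h2, hu (deg m)]

end Bij


section Rename
variable (τ : Fin n ≃ Fin n)

/-- relabelling of variables -/
def rmap : MvPowerSeries (Fin n) K → MvPowerSeries (Fin n) K :=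
  fun f m => f (Finsupp.equivMapDomain τ.symm m)

lemma rmap_apply (f : R) (m : M) : rmap τ f m = f (Finsupp.equivMapDomain τ.symm m) := rfl

lemma emd_add (e : Fin n ≃ Fin n) (p q : M) :
    Finsupp.equivMapDomain e (p + q)
      = Finsupp.equivMapDomain e p + Finsupp.equivMapDomain e q := by
  ext j
  simp [Finsupp.equivMapDomain_apply]

lemma emd_inv (e : Fin n ≃ Fin n) (m : M) :
    Finsupp.equivMapDomain e (Finsupp.equivMapDomain e.symm m) = m := by
  ext j
  simp [Finsupp.equivMapDomain_apply]

lemma rmap_rmap_symm (f : R) : rmap τ (rmap τ.symm f) = f := by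
  funext m
  rw [rmap_apply, rmap_apply, Equiv.symm_symm, emd_inv]

lemma rmap_symm_rmap (f : R) : rmap τ.symm (rmap τ f) = f := by
  funext m
  rw [rmap_apply, rmap_apply]
  have : Finsupp.equivMapDomain τ.symm (Finsupp.equivMapDomain τ.symm.symm m) = m :=
    emd_inv τ.symm m
  rw [Equiv.symm_symm] at this ⊢
  rw [this]

lemma rmap_add (f g : R) : rmap τ (f + g) = rmap τ f + rmap τ g := rfl

lemma rmap_smul (c : K) (f : R) : rmap τ (c • f) = c • rmap τ f := rfl

lemma rmap_zero : rmap τ (0 : R) = 0 := rfl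

lemma rmap_one : rmap τ (1 : R) = 1 := by
  funext m
  rw [rmap_apply]
  have h1 : ∀ p : M, (1 : R) p = if p = 0 then 1 else 0 := fun p => MvPowerSeries.coeff_one p
  rw [h1, h1]
  have hiff : Finsupp.equivMapDomain τ.symm m = 0 ↔ m = 0 := by
    constructor
    · intro h
      have := congrArg (Finsupp.equivMapDomain τ) h
      rwa [emd_inv, Finsupp.equivMapDomain_zero] at this
    · intro h
      rw [h, Finsupp.equivMapDomain_zero]
  by_cases h : m = 0
  · rw [if_pos h, if_pos (hiff.mpr h)]
  · rw [if_neg h, if_neg (fun hc => h (hiff.mp hc))]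

lemma rmap_mul (f g : R) : rmap τ (f * g) = rmap τ f * rmap τ g := by
  funext m
  rw [rmap_apply, mulc, mulc]
  refine Finset.sum_nbij'
    (i := fun (x : M × M) => ((Finsupp.equivMapDomain τ x.1, Finsupp.equivMapDomain τ x.2) : M × M))
    (j := fun (x : M × M) =>
      ((Finsupp.equivMapDomain τ.symm x.1, Finsupp.equivMapDomain τ.symm x.2) : M × M))
    ?_ ?_ ?_ ?_ ?_
  · rintro ⟨p, q⟩ hpq
    rw [Finset.HasAntidiagonal.mem_antidiagonal] at hpq ⊢
    rw [← emd_add, hpq, emd_inv]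
  · rintro ⟨p, q⟩ hpq
    rw [Finset.HasAntidiagonal.mem_antidiagonal] at hpq ⊢
    rw [← emd_add, hpq]
  · rintro ⟨p, q⟩ _
    have h1 : ∀ u : M, Finsupp.equivMapDomain τ.symm (Finsupp.equivMapDomain τ u) = u := by
      intro u
      have := emd_inv τ.symm u
      rwa [Equiv.symm_symm] at this
    simp only [h1]
  · rintro ⟨p, q⟩ _
    simp only [emd_inv]
  · rintro ⟨p, q⟩ _
    simp only [rmap_apply]
    have h1 : ∀ u : M, Finsupp.equivMapDomain τ.symm (Finsupp.equivMapDomain τ u) = u := by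
      intro u
      have := emd_inv τ.symm u
      rwa [Equiv.symm_symm] at this
    rw [h1, h1]

lemma rmap_pderiv (j : Fin n) (f : R) :
    mvPderiv j (rmap τ f) = rmap τ (mvPderiv (τ.symm j) f) := by
  funext m
  rw [pderiv_apply, rmap_apply, rmap_apply, pderiv_apply]
  have h1 : Finsupp.equivMapDomain τ.symm (m + Finsupp.single j 1)
      = Finsupp.equivMapDomain τ.symm m + Finsupp.single (τ.symm j) 1 := by
    rw [emd_add, Finsupp.equivMapDomain_single]
  have h2 : (Finsupp.equivMapDomain τ.symm m) (τ.symm j) = m j := by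
    rw [Finsupp.equivMapDomain_apply, Equiv.symm_symm, Equiv.apply_symm_apply]
  rw [h1, h2]

lemma rmap_sum {ι : Type*} (s : Finset ι) (g : ι → R) :
    rmap τ (∑ i ∈ s, g i) = ∑ i ∈ s, rmap τ (g i) := by
  funext m
  rw [rmap_apply, sumc, sumc]
  exact Finset.sum_congr rfl fun i _ => rfl

lemma rmap_const (f : R) : rmap τ f 0 = f 0 := by
  rw [rmap_apply, Finsupp.equivMapDomain_zero]

end Rename

end Rect

/-- rectification of a nonsingular formal vector field: if
`v = Σ aᵢ(x)∂ᵢ` is a derivation of `R = K[[x₁,…,xₙ]]` with `aᵢ(0) ≠ 0` for some `i`,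
then `v` lies in the adjoint orbit of `∂₁`: there is an automorphism `φ` of `R` with
`φ ∘ v ∘ φ⁻¹ = ∂₁`. -/
theorem rectification_of_nonsingular_vector_field
    (K : Type*) [Field K] [CharZero K] (n : ℕ) (hn : 0 < n)
    (v : Derivation K (MvPowerSeries (Fin n) K) (MvPowerSeries (Fin n) K))
    (a : Fin n → MvPowerSeries (Fin n) K)
    (hv : ∀ f, v f = ∑ i, a i * mvPderiv i f)
    (ha : ∃ i, MvPowerSeries.constantCoeff (a i) ≠ 0) :
    ∃ φ : MvPowerSeries (Fin n) K ≃ₐ[K] MvPowerSeries (Fin n) K,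
      ∀ f, φ (v (φ.symm f)) = mvPderiv (⟨0, hn⟩ : Fin n) f := by
  classical
  obtain ⟨i0, hi0⟩ := ha
  set z : Fin n := ⟨0, hn⟩ with hzdef
  set τ : Fin n ≃ Fin n := Equiv.swap z i0 with hτdef
  set w : MvPowerSeries (Fin n) K → MvPowerSeries (Fin n) K :=
    fun f => Rect.rmap τ (v (Rect.rmap τ.symm f)) with hwdef
  have hadd : ∀ f g, w (f + g) = w f + w g := by
    intro f g
    show Rect.rmap τ (v (Rect.rmap τ.symm (f + g))) = _
    rw [Rect.rmap_add τ.symm, map_add, Rect.rmap_add τ]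
  have hsmul : ∀ (c : K) f, w (c • f) = c • w f := by
    intro c f
    show Rect.rmap τ (v (Rect.rmap τ.symm (c • f))) = _
    rw [Rect.rmap_smul τ.symm, Derivation.map_smul, Rect.rmap_smul τ]
  have hleib : ∀ f g, w (f * g) = f * w g + w f * g := by
    intro f g
    show Rect.rmap τ (v (Rect.rmap τ.symm (f * g))) = _
    rw [Rect.rmap_mul τ.symm, Derivation.leibniz, smul_eq_mul, smul_eq_mul,
      Rect.rmap_add τ, Rect.rmap_mul τ, Rect.rmap_mul τ, Rect.rmap_rmap_symm,
      Rect.rmap_rmap_symm]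
    show f * w g + g * w f = f * w g + w f * g
    ring
  set b : Fin n → MvPowerSeries (Fin n) K := fun j => Rect.rmap τ (a (τ.symm j)) with hbdef
  set β : Fin n → K := fun j => b j 0 with hβdef
  have hβ : ∀ j, b j 0 = β j := fun j => rfl
  have hβz : β z ≠ 0 := by
    have h1 : β z = a (τ.symm z) 0 := Rect.rmap_const τ (a (τ.symm z))
    have h2 : τ.symm z = i0 := by
      rw [hτdef, Equiv.symm_swap, Equiv.swap_apply_left]
    rw [h1, h2]
    exact hi0
  have hw : ∀ f, w f = ∑ j, b j * mvPderiv j f := by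
    intro f
    show Rect.rmap τ (v (Rect.rmap τ.symm f)) = _
    rw [hv, Rect.rmap_sum τ]
    have hterm : ∀ j, Rect.rmap τ (a j * mvPderiv j (Rect.rmap τ.symm f))
        = Rect.rmap τ (a j) * mvPderiv (τ j) f := by
      intro j
      rw [Rect.rmap_mul τ]
      congr 1
      have h1 : mvPderiv j (Rect.rmap τ.symm f)
          = Rect.rmap τ.symm (mvPderiv (τ j) f) := by
        have := Rect.rmap_pderiv τ.symm j f
        rwa [Equiv.symm_symm] at this
      rw [h1, Rect.rmap_rmap_symm]
    rw [Finset.sum_congr rfl fun j _ => hterm j]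
    refine Fintype.sum_equiv τ _ _ ?_
    intro j
    show Rect.rmap τ (a j) * mvPderiv (τ j) f = b (τ j) * mvPderiv (τ j) f
    rw [hbdef]
    simp only [Equiv.symm_apply_apply]
  set A : MvPowerSeries (Fin n) K →ₐ[K] MvPowerSeries (Fin n) K :=
    { toFun := fun f => Rect.Tmap z w (Rect.rmap τ f)
      map_one' := by
        show Rect.Tmap z w (Rect.rmap τ 1) = 1
        rw [Rect.rmap_one, Rect.Tmap_one z w hadd hsmul hleib]
      map_mul' := fun f g => by
        show Rect.Tmap z w (Rect.rmap τ (f * g))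
          = Rect.Tmap z w (Rect.rmap τ f) * Rect.Tmap z w (Rect.rmap τ g)
        rw [Rect.rmap_mul, Rect.Tmap_mul z w hadd hsmul hleib]
      map_zero' := by
        show Rect.Tmap z w (Rect.rmap τ 0) = 0
        rw [Rect.rmap_zero, Rect.Tmap_zero z w hadd hsmul hleib]
      map_add' := fun f g => by
        show Rect.Tmap z w (Rect.rmap τ (f + g))
          = Rect.Tmap z w (Rect.rmap τ f) + Rect.Tmap z w (Rect.rmap τ g)
        rw [Rect.rmap_add, Rect.Tmap_add z w hadd hsmul hleib]
      commutes' := fun c => by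
        show Rect.Tmap z w (Rect.rmap τ (algebraMap K (MvPowerSeries (Fin n) K) c))
          = algebraMap K (MvPowerSeries (Fin n) K) c
        rw [Algebra.algebraMap_eq_smul_one, Rect.rmap_smul, Rect.rmap_one,
          Rect.Tmap_smul z w hadd hsmul hleib, Rect.Tmap_one z w hadd hsmul hleib] }
    with hAdef
  have hbij : Function.Bijective A := by
    have h1 : Function.Bijective (Rect.rmap (K := K) τ) := by
      constructor
      · intro f g hfg
        rw [← Rect.rmap_symm_rmap τ f, hfg, Rect.rmap_symm_rmap τ g]
      · intro f
        exact ⟨Rect.rmap τ.symm f, Rect.rmap_rmap_symm τ f⟩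
    have h2 : Function.Bijective (Rect.Tmap z w) :=
      ⟨Rect.T_inj z w hadd hsmul hleib b β hw hβ hβz,
        Rect.T_surj z w hadd hsmul hleib b β hw hβ hβz⟩
    exact h2.comp h1
  refine ⟨AlgEquiv.ofBijective A hbij, ?_⟩
  intro f
  have key : ∀ g, A (v g) = mvPderiv z (A g) := by
    intro g
    show Rect.Tmap z w (Rect.rmap τ (v g)) = mvPderiv z (Rect.Tmap z w (Rect.rmap τ g))
    have hwg : w (Rect.rmap τ g) = Rect.rmap τ (v g) := by
      show Rect.rmap τ (v (Rect.rmap τ.symm (Rect.rmap τ g))) = _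
      rw [Rect.rmap_symm_rmap]
    rw [← hwg, Rect.Tmap_w z w hadd hsmul hleib]
  have hφ : A ((AlgEquiv.ofBijective A hbij).symm f) = f :=
    AlgEquiv.apply_symm_apply (AlgEquiv.ofBijective A hbij) f
  show A (v ((AlgEquiv.ofBijective A hbij).symm f)) = mvPderiv z f
  rw [key ((AlgEquiv.ofBijective A hbij).symm f), hφ]
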